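/- Let S, T be symmetric operators on a dense domain D satisfying the weak Weyl commutation relation with weak Weyl extension H (a self-adjoint extension of S with D(T̄) ⊆ D(H) and ⟨e^{−itH}ξ, Tη⟩ = ⟨(T+t)ξ, e^{itH}η⟩ for ξ, η ∈ D, t ∈ ℝ). If T is essentially self-adjoint, then e^{itH} e^{−isT̄} = e^{−its} e^{−isT̄} e^{itH} for all s, t ∈ ℝ. -/

import Mathlib

set_option linter.unusedSectionVars false

open scoped ComplexInnerProductSpace
open Filter Topology

section WWAux

variable {H₀ : Type*} [NormedAddCommGroup H₀] [InnerProductSpace ℂ H₀] [CompleteSpace H₀]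

lemma ww_pmap_congr {f g : H₀ →ₗ.[ℂ] H₀} (h : f = g) {x : H₀} (hx : x ∈ f.domain)
    (hx' : x ∈ g.domain) : f ⟨x, hx⟩ = g ⟨x, hx'⟩ := by subst h; rfl

lemma ww_grp_cancel (V : ℝ → H₀ →L[ℂ] H₀) (hV0 : V 0 = 1)
    (hVadd : ∀ s t : ℝ, V (s + t) = (V s).comp (V t)) (s : ℝ) (x : H₀) :
    V s (V (-s) x) = x := by
  have h := hVadd s (-s)
  rw [add_neg_cancel, hV0] at h
  have : (1 : H₀ →L[ℂ] H₀) x = ((V s).comp (V (-s))) x := by rw [← h]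
  simpa using this.symm

lemma ww_inner_map (V : ℝ → H₀ →L[ℂ] H₀) (hVunit : ∀ s : ℝ, ∀ x : H₀, ‖V s x‖ = ‖x‖)
    (s : ℝ) (a b : H₀) : ⟪V s a, V s b⟫ = ⟪a, b⟫ :=
  LinearIsometry.inner_map_map ⟨(V s).toLinearMap, hVunit s⟩ a b

lemma ww_adjoint_rel (V : ℝ → H₀ →L[ℂ] H₀) (hV0 : V 0 = 1)
    (hVadd : ∀ s t : ℝ, V (s + t) = (V s).comp (V t))
    (hVunit : ∀ s : ℝ, ∀ x : H₀, ‖V s x‖ = ‖x‖) (t : ℝ) (a b : H₀) :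
    ⟪V (-t) a, b⟫ = ⟪a, V t b⟫ := by
  have := ww_inner_map V hVunit t (V (-t) a) b
  rw [ww_grp_cancel V hV0 hVadd t a] at this
  exact this.symm

lemma ww_closure_ext {T : H₀ →ₗ.[ℂ] H₀} (hT : T.IsClosable) (p : H₀ × H₀ → Prop)
    (hp : IsClosed {q : H₀ × H₀ | p q}) (h : ∀ x : T.domain, p ((x : H₀), T x)) :
    ∀ x : T.closure.domain, p ((x : H₀), T.closure x) := by
  intro x
  have hx : ((x : H₀), T.closure x) ∈ T.closure.graph := T.closure.mem_graph x
  rw [← hT.graph_closure_eq_closure_graph] at hx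
  have hsub : (T.graph : Set (H₀ × H₀)) ⊆ {q | p q} := by
    rintro ⟨a, b⟩ hab
    have hab' : (a, b) ∈ T.graph := hab
    rw [LinearPMap.mem_graph_iff] at hab'
    obtain ⟨y, hy1, hy2⟩ := hab'
    subst hy1; subst hy2
    exact h y
  have hx' : ((x : H₀), T.closure x) ∈ closure (T.graph : Set (H₀ × H₀)) := by
    rw [← T.graph.topologicalClosure_coe]
    exact_mod_cast hx
  exact closure_minimal hsub hp hx'

lemma ww_dense_image (V : ℝ → H₀ →L[ℂ] H₀) (hV0 : V 0 = 1)
    (hVadd : ∀ s t : ℝ, V (s + t) = (V s).comp (V t))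
    (hVunit : ∀ s : ℝ, ∀ x : H₀, ‖V s x‖ = ‖x‖) (s : ℝ)
    {A : Set H₀} (hA : Dense A) : Dense (⇑(V s) '' A) := by
  intro x
  rw [Metric.mem_closure_iff]
  intro ε hε
  obtain ⟨y, hy, hdy⟩ := Metric.mem_closure_iff.mp (hA (V (-s) x)) ε hε
  refine ⟨V s y, ⟨y, hy, rfl⟩, ?_⟩
  have hxy : x - V s y = V s (V (-s) x - y) := by
    rw [map_sub, ww_grp_cancel V hV0 hVadd s x]
  rw [dist_eq_norm, hxy, hVunit, ← dist_eq_norm]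
  exact hdy

lemma ww_real_smul (r : ℝ) (v : H₀) : (r : ℂ)⁻¹ • v = r⁻¹ • v := by
  rw [← Complex.ofReal_inv, ← algebraMap_smul (R := ℝ) (A := ℂ)]
  rfl

end WWAux

/-- If `{S, T}` satisfy the weak Weyl commutation relation with weak Weyl extension `A`
(a self-adjoint extension of `S`) and `T` is essentially self-adjoint, then the unitary
groups `U(t) = e^{itA}` and `W(s) = e^{-isT̄}` satisfy the Weyl commutation relation
`e^{itA} e^{-isT̄} = e^{-its} e^{-isT̄} e^{itA}`. -/
theorem weak_weyl_essentially_selfAdjoint_implies_weyl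
    {H₀ : Type*} [NormedAddCommGroup H₀] [InnerProductSpace ℂ H₀] [CompleteSpace H₀]
    (D : Submodule ℂ H₀) (hD : Dense (D : Set H₀))
    (S T : H₀ →ₗ.[ℂ] H₀) (hSdom : S.domain = D) (hTdom : T.domain = D)
    -- `S` and `T` are symmetric
    (hSsymm : ∀ ξ η : S.domain, ⟪S ξ, (η : H₀)⟫ = ⟪(ξ : H₀), S η⟫)
    (hTsymm : ∀ ξ η : T.domain, ⟪T ξ, (η : H₀)⟫ = ⟪(ξ : H₀), T η⟫)
    (hTclosable : T.IsClosable)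
    -- `A` is a self-adjoint extension of `S`
    (A : H₀ →ₗ.[ℂ] H₀) (hSA : S ≤ A) (hAdense : Dense (A.domain : Set H₀))
    (hAsa : A.adjoint = A)
    -- (ww1): `D(T̄) ⊆ D(A)`
    (hww1 : T.closure.domain ≤ A.domain)
    -- `U t = e^{itA}`: the unitary one-parameter group generated by `A` (Stone's theorem)
    (U : ℝ → H₀ →L[ℂ] H₀)
    (hU0 : U 0 = 1) (hUadd : ∀ s t : ℝ, U (s + t) = (U s).comp (U t))
    (hUunit : ∀ t : ℝ, ∀ ξ : H₀, ‖U t ξ‖ = ‖ξ‖)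
    (hUgen : ∀ ξ : A.domain, Tendsto (fun t : ℝ => (t : ℂ)⁻¹ • (U t (ξ : H₀) - (ξ : H₀)))
      (𝓝[≠] (0 : ℝ)) (𝓝 (Complex.I • A ξ)))
    (hUgen' : ∀ ξ η : H₀, Tendsto (fun t : ℝ => (t : ℂ)⁻¹ • (U t ξ - ξ))
      (𝓝[≠] (0 : ℝ)) (𝓝 η) → ξ ∈ A.domain)
    -- (ww2): `⟨e^{-itA}ξ, Tη⟩ = ⟨(T + t)ξ, e^{itA}η⟩` for `ξ, η ∈ D`, `t ∈ ℝ`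
    (hww2 : ∀ (ξ η : T.domain) (t : ℝ),
      ⟪U (-t) (ξ : H₀), T η⟫ = ⟪T ξ + (t : ℂ) • (ξ : H₀), U t (η : H₀)⟫)
    -- `T` is essentially self-adjoint
    (hess : T.adjoint = T.closure)
    -- `W s = e^{-isT̄}`: the unitary one-parameter group generated by `-T̄` (Stone's theorem)
    (W : ℝ → H₀ →L[ℂ] H₀)
    (hW0 : W 0 = 1) (hWadd : ∀ s t : ℝ, W (s + t) = (W s).comp (W t))
    (hWunit : ∀ s : ℝ, ∀ ξ : H₀, ‖W s ξ‖ = ‖ξ‖)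
    (hWgen : ∀ ξ : T.closure.domain,
      Tendsto (fun s : ℝ => (s : ℂ)⁻¹ • (W s (ξ : H₀) - (ξ : H₀)))
        (𝓝[≠] (0 : ℝ)) (𝓝 ((-Complex.I) • T.closure ξ)))
    (hWgen' : ∀ ξ η : H₀, Tendsto (fun s : ℝ => (s : ℂ)⁻¹ • (W s ξ - ξ))
      (𝓝[≠] (0 : ℝ)) (𝓝 η) → ξ ∈ T.closure.domain) :
    ∀ s t : ℝ,
      (U t).comp (W s) = Complex.exp (-(Complex.I * t * s)) • ((W s).comp (U t)) := by
  intro s t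
  -- density facts
  have hTdense : Dense (T.domain : Set H₀) := by rw [hTdom]; exact hD
  have hTcdense : Dense ((T.closure.domain : Submodule ℂ H₀) : Set H₀) :=
    Dense.mono (SetLike.coe_subset_coe.mpr T.le_closure.1) hTdense
  have hdom : T.adjoint.domain = T.closure.domain := congrArg LinearPMap.domain hess
  have hdom1 : ∀ z : H₀, z ∈ T.adjoint.domain → z ∈ T.closure.domain := fun z hz => hdom ▸ hz
  have hdom2 : ∀ z : H₀, z ∈ T.closure.domain → z ∈ T.adjoint.domain := fun z hz => hdom.symm ▸ hz
  -- extended weak Weyl relation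
  have hww2' : ∀ (ξ : T.domain) (t' : ℝ) (η : T.closure.domain),
      ⟪T ξ + (t' : ℂ) • (ξ : H₀), U t' (η : H₀)⟫ = ⟪(ξ : H₀), U t' (T.closure η)⟫ := by
    intro ξ t' η
    refine ww_closure_ext hTclosable
      (fun q => ⟪T ξ + (t' : ℂ) • (ξ : H₀), U t' q.1⟫ = ⟪(ξ : H₀), U t' q.2⟫) ?_ ?_ η
    · exact isClosed_eq
        (Continuous.inner continuous_const ((U t').continuous.comp continuous_fst))
        (Continuous.inner continuous_const ((U t').continuous.comp continuous_snd))
    · intro η'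
      rw [← hww2 ξ η' t']
      exact ww_adjoint_rel U hU0 hUadd hUunit t' (ξ : H₀) (T η')
  -- Lemma A: U t' maps D(T̄) into itself, with T̄ U(t') = U(t') T̄ - t' U(t')
  have hA : ∀ (t' : ℝ) (η : T.closure.domain), ∃ hmem : U t' (η : H₀) ∈ T.closure.domain,
      T.closure ⟨U t' (η : H₀), hmem⟩
        = U t' (T.closure η) - (t' : ℂ) • U t' (η : H₀) := by
    intro t' η
    set w : H₀ := U t' (T.closure η) - (t' : ℂ) • U t' (η : H₀) with hw
    have key : ∀ ξ : T.domain, ⟪w, (ξ : H₀)⟫ = ⟪U t' (η : H₀), T ξ⟫ := by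
      intro ξ
      have h1 := hww2' ξ t' η
      rw [inner_add_left, inner_smul_left, Complex.conj_ofReal] at h1
      have h2 : ⟪T ξ, U t' (η : H₀)⟫ = ⟪(ξ : H₀), w⟫ := by
        rw [hw, inner_sub_right, inner_smul_right]
        linear_combination h1
      calc ⟪w, (ξ : H₀)⟫ = (starRingEnd ℂ) ⟪(ξ : H₀), w⟫ := (inner_conj_symm _ _).symm
        _ = (starRingEnd ℂ) ⟪T ξ, U t' (η : H₀)⟫ := by rw [h2]
        _ = ⟪U t' (η : H₀), T ξ⟫ := inner_conj_symm _ _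
    have hmem' : U t' (η : H₀) ∈ T.adjoint.domain :=
      LinearPMap.mem_adjoint_domain_of_exists _ ⟨w, key⟩
    have happ : T.adjoint ⟨U t' (η : H₀), hmem'⟩ = w :=
      LinearPMap.adjoint_apply_eq hTdense ⟨U t' (η : H₀), hmem'⟩ key
    have hmem : U t' (η : H₀) ∈ T.closure.domain := hdom1 _ hmem'
    exact ⟨hmem, by rw [← ww_pmap_congr hess hmem' hmem]; exact happ⟩
  -- symmetry of the closure of T
  have hTcsymm : ∀ (x y : H₀) (hx : x ∈ T.closure.domain) (hy : y ∈ T.closure.domain),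
      ⟪T.closure ⟨x, hx⟩, y⟫ = ⟪x, T.closure ⟨y, hy⟩⟫ := by
    intro x y hx hy
    have hx' : x ∈ T.adjoint.domain := hdom2 _ hx
    have base : ∀ y' : T.domain, ⟪T.closure ⟨x, hx⟩, (y' : H₀)⟫ = ⟪x, T y'⟫ := by
      intro y'
      have h := (LinearPMap.adjoint_isFormalAdjoint hTdense) ⟨x, hx'⟩ y'
      rwa [ww_pmap_congr hess hx' hx] at h
    exact ww_closure_ext hTclosable (fun q => ⟪T.closure ⟨x, hx⟩, q.1⟫ = ⟪x, q.2⟫)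
      (isClosed_eq (Continuous.inner continuous_const continuous_fst)
        (Continuous.inner continuous_const continuous_snd)) base ⟨y, hy⟩
  -- W-invariance of D(T̄) and commutation with T̄
  have hWinv : ∀ (s' : ℝ) (ζ : T.closure.domain), ∃ hmem : W s' (ζ : H₀) ∈ T.closure.domain,
      T.closure ⟨W s' (ζ : H₀), hmem⟩ = W s' (T.closure ζ) := by
    intro s' ζ
    have hcomm : ∀ h : ℝ, W h (W s' (ζ : H₀)) = W s' (W h (ζ : H₀)) := by
      intro h
      calc W h (W s' (ζ : H₀)) = ((W h).comp (W s')) (ζ : H₀) := rfl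
        _ = W (h + s') (ζ : H₀) := by rw [hWadd]
        _ = W (s' + h) (ζ : H₀) := by rw [add_comm]
        _ = W s' (W h (ζ : H₀)) := by rw [hWadd]; rfl
    have hlim : Tendsto (fun h : ℝ => (h : ℂ)⁻¹ • (W h (W s' (ζ : H₀)) - W s' (ζ : H₀)))
        (𝓝[≠] (0 : ℝ)) (𝓝 (W s' ((-Complex.I) • T.closure ζ))) := by
      have heq : (fun h : ℝ => (h : ℂ)⁻¹ • (W h (W s' (ζ : H₀)) - W s' (ζ : H₀)))
          = fun h : ℝ => W s' ((h : ℂ)⁻¹ • (W h (ζ : H₀) - (ζ : H₀))) := by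
        funext h
        rw [hcomm h, ← map_sub, ← map_smul]
      rw [heq]
      exact ((W s').continuous.tendsto _).comp (hWgen ζ)
    have hmem : W s' (ζ : H₀) ∈ T.closure.domain := hWgen' _ _ hlim
    have hlim2 := hWgen ⟨W s' (ζ : H₀), hmem⟩
    have huniq := tendsto_nhds_unique hlim2 hlim
    refine ⟨hmem, ?_⟩
    have h3 : (-Complex.I) • T.closure ⟨W s' (ζ : H₀), hmem⟩
        = (-Complex.I) • (W s' (T.closure ζ)) := by rw [huniq, map_smul]
    exact smul_right_injective H₀ (neg_ne_zero.mpr Complex.I_ne_zero) h3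
  -- derivative of the group W
  have hWd0 : ∀ ζ : T.closure.domain,
      HasDerivAt (fun u : ℝ => W u (ζ : H₀)) ((-Complex.I) • T.closure ζ) 0 := by
    intro ζ
    rw [hasDerivAt_iff_tendsto_slope]
    have heq : (fun h : ℝ => (h : ℂ)⁻¹ • (W h (ζ : H₀) - (ζ : H₀)))
        = slope (fun u : ℝ => W u (ζ : H₀)) 0 := by
      funext h
      rw [ww_real_smul, slope_def_module]
      simp [hW0]
    have := hWgen ζ
    rwa [heq] at this
  have hWderiv : ∀ (ζ : T.closure.domain) (s' : ℝ),
      HasDerivAt (fun u : ℝ => W u (ζ : H₀)) (W s' ((-Complex.I) • T.closure ζ)) s' := by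
    intro ζ s'
    have h0' := hWd0 ζ
    rw [show (0 : ℝ) = s' - s' by ring] at h0'
    have h1 : HasDerivAt (fun u : ℝ => W (u - s') (ζ : H₀))
        ((-Complex.I) • T.closure ζ) s' := h0'.comp_sub_const s' s'
    have h2 := ((W s').restrictScalars ℝ).hasFDerivAt.comp_hasDerivAt s' h1
    have hpt : ∀ u : ℝ, W u (ζ : H₀) = ((W s').restrictScalars ℝ) (W (u - s') (ζ : H₀)) := by
      intro u
      calc W u (ζ : H₀) = W (s' + (u - s')) (ζ : H₀) := by rw [add_sub_cancel]
        _ = ((W s').comp (W (u - s'))) (ζ : H₀) := by rw [hWadd]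
        _ = ((W s').restrictScalars ℝ) (W (u - s') (ζ : H₀)) := rfl
    have h2' := h2.congr_of_eventuallyEq (Filter.Eventually.of_forall hpt)
    exact h2'
  -- the phase function
  set c : ℝ → ℂ := fun u : ℝ => Complex.exp ((-(Complex.I * t)) * u) with hcdef
  have hcd : ∀ u : ℝ, HasDerivAt c ((-(Complex.I * t)) * c u) u := by
    intro u
    have h1 : HasDerivAt (fun v : ℝ => (-(Complex.I * t)) * (v : ℂ)) (-(Complex.I * t)) u := by
      simpa using (Complex.ofRealCLM.hasDerivAt (x := u)).const_mul (-(Complex.I * t))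
    simpa [hcdef, mul_comm] using h1.cexp
  -- main constancy argument
  have hmain : ∀ (ξ η : T.closure.domain) (u : ℝ),
      ⟪c u • U (-t) (W u (U t (ξ : H₀))), W u (η : H₀)⟫ = ⟪(ξ : H₀), (η : H₀)⟫ := by
    intro ξ η u
    obtain ⟨hζmem, hζval⟩ := hA t ξ
    set ζ : T.closure.domain := ⟨U t (ξ : H₀), hζmem⟩ with hζdef
    set V : ℝ → H₀ := fun v : ℝ => c v • U (-t) (W v (ζ : H₀)) with hVdef
    -- membership and the value of T̄ on V v
    have hVfacts : ∀ v : ℝ, ∃ hm : V v ∈ T.closure.domain,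
        T.closure ⟨V v, hm⟩
          = c v • (U (-t) (W v (T.closure ζ)) + (t : ℂ) • U (-t) (W v (ζ : H₀))) := by
      intro v
      obtain ⟨hm1, hv1⟩ := hWinv v ζ
      obtain ⟨hm2, hv2⟩ := hA (-t) ⟨W v (ζ : H₀), hm1⟩
      have hm : V v ∈ T.closure.domain := T.closure.domain.smul_mem (c v) hm2
      refine ⟨hm, ?_⟩
      have hsm : (⟨V v, hm⟩ : T.closure.domain)
          = c v • (⟨U (-t) (W v (ζ : H₀)), hm2⟩ : T.closure.domain) := rfl
      rw [hsm, T.closure.map_smul, hv2, hv1]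
      push_cast
      rw [neg_smul, sub_neg_eq_add]
    -- derivative of V
    have hVd : ∀ (v : ℝ) (hm : V v ∈ T.closure.domain),
        HasDerivAt V ((-Complex.I) • T.closure ⟨V v, hm⟩) v := by
      intro v hm
      obtain ⟨hm', hval⟩ := hVfacts v
      have hd1 := (hcd v).smul
        (((U (-t)).restrictScalars ℝ).hasFDerivAt.comp_hasDerivAt v (hWderiv ζ v))
      have hval' : T.closure ⟨V v, hm⟩ = T.closure ⟨V v, hm'⟩ := rfl
      rw [hval', hval]
      convert hd1 using 1
      show _ = c v • ((U (-t)) (W v ((-Complex.I) • T.closure ζ)))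
        + (-(Complex.I * ↑t) * c v) • (U (-t)) (W v (ζ : H₀))
      rw [map_smul, map_smul]
      module
      rfl
    -- the inner product with W v η is constant
    have hF : ∀ v : ℝ, HasDerivAt (fun u' : ℝ => ⟪V u', W u' (η : H₀)⟫) 0 v := by
      intro v
      obtain ⟨hm, _⟩ := hVfacts v
      obtain ⟨hmW, hvW⟩ := hWinv v η
      have hd := HasDerivAt.inner ℂ (hVd v hm) (hWderiv η v)
      have e1 : ⟪V v, W v (T.closure η)⟫ = ⟪T.closure ⟨V v, hm⟩, W v (η : H₀)⟫ := by
        rw [← hvW]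
        exact (hTcsymm (V v) (W v (η : H₀)) hm hmW).symm
      have hzero : ⟪V v, W v ((-Complex.I) • T.closure η)⟫
          + ⟪(-Complex.I) • T.closure ⟨V v, hm⟩, W v (η : H₀)⟫ = 0 := by
        have hh1 : ⟪V v, W v ((-Complex.I) • T.closure η)⟫
            = -Complex.I * ⟪T.closure ⟨V v, hm⟩, W v (η : H₀)⟫ := by
          rw [map_smul, inner_smul_right, ← hvW,
            ← hTcsymm (V v) (W v (η : H₀)) hm hmW]
        have hh2 : ⟪(-Complex.I) • T.closure ⟨V v, hm⟩, W v (η : H₀)⟫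
            = Complex.I * ⟪T.closure ⟨V v, hm⟩, W v (η : H₀)⟫ := by
          rw [inner_smul_left]
          simp only [map_neg, Complex.conj_I, neg_neg]
        rw [hh1, hh2]
        ring
      rwa [hzero] at hd
    have hdiff : Differentiable ℝ (fun u' : ℝ => ⟪V u', W u' (η : H₀)⟫) :=
      fun v => (hF v).differentiableAt
    have hder : ∀ v, deriv (fun u' : ℝ => ⟪V u', W u' (η : H₀)⟫) v = 0 :=
      fun v => (hF v).deriv
    have hconst := is_const_of_deriv_eq_zero hdiff hder u 0
    have hV0' : V 0 = (ξ : H₀) := by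
      have h1 : W 0 (ζ : H₀) = (ζ : H₀) := by rw [hW0]; rfl
      have h2 : U (-t) (U t (ξ : H₀)) = (ξ : H₀) := by
        have := ww_grp_cancel U hU0 hUadd (-t) (ξ : H₀)
        rwa [neg_neg] at this
      have hc0 : c 0 = 1 := by
        rw [hcdef]
        simp
      calc V 0 = c 0 • U (-t) (W 0 (ζ : H₀)) := rfl
        _ = c 0 • U (-t) (U t (ξ : H₀)) := by rw [h1]
        _ = c 0 • (ξ : H₀) := by rw [h2]
        _ = (ξ : H₀) := by rw [hc0, one_smul]
    have h00 : ⟪V 0, W 0 (η : H₀)⟫ = ⟪(ξ : H₀), (η : H₀)⟫ := by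
      have hWη : W 0 (η : H₀) = (η : H₀) := by rw [hW0]; rfl
      rw [hV0', hWη]
    exact hconst.trans h00
  -- conclude equality on the dense domain, then everywhere
  have horth : ∀ ξ : T.closure.domain,
      c s • U (-t) (W s (U t (ξ : H₀))) = W s (ξ : H₀) := by
    intro ξ
    set v : H₀ := c s • U (-t) (W s (U t (ξ : H₀))) - W s (ξ : H₀) with hv
    have hz : ∀ η : T.closure.domain, ⟪v, W s (η : H₀)⟫ = 0 := by
      intro η
      rw [hv, inner_sub_left, hmain ξ η s, ww_inner_map W hWunit s, sub_self]
    have hdense' : Dense (⇑(W s) '' ((T.closure.domain : Submodule ℂ H₀) : Set H₀)) :=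
      ww_dense_image W hW0 hWadd hWunit s hTcdense
    have hzero : (fun z : H₀ => ⟪v, z⟫) = fun _ : H₀ => (0 : ℂ) := by
      refine Continuous.ext_on hdense' (continuous_const.inner continuous_id) continuous_const ?_
      rintro z ⟨η, hη, rfl⟩
      exact hz ⟨η, hη⟩
    have hv0 : v = 0 := by
      have := congrFun hzero v
      simpa [inner_self_eq_zero] using this
    exact sub_eq_zero.mp hv0
  have hall : ∀ x : H₀, c s • U (-t) (W s (U t x)) = W s x := by
    have heq : (fun x : H₀ => c s • U (-t) (W s (U t x))) = fun x : H₀ => W s x := by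
      refine Continuous.ext_on hTcdense ?_ (W s).continuous ?_
      · exact (((U (-t)).continuous.comp ((W s).continuous.comp (U t).continuous)).const_smul (c s))
      · intro x hx
        exact horth ⟨x, hx⟩
    intro x
    exact congrFun heq x
  ext x
  have h2 := congrArg (U t) (hall x)
  rw [map_smul, ww_grp_cancel U hU0 hUadd t (W s (U t x))] at h2
  simp only [ContinuousLinearMap.comp_apply, ContinuousLinearMap.smul_apply]
  rw [← h2, hcdef]
  congr 1
  push_cast
  ring
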